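/- Let μ be a nontrivial probability measure on the unit circle with monic orthogonal polynomials Φ_n. For each n there exists α_n in the open unit disk such that Φ_{n+1}(z) = z Φ_n(z) − conj(α_n) Φ_n^*(z), where Φ_n^*(z) = z^n conj(Φ_n(1/conj(z))). -/

import Mathlib

open MeasureTheory Polynomial

/-- The reversed, coefficient-conjugated polynomial `τ_n(p)(z) = z^n conj(p(1/conj z))`. -/
noncomputable def polyStar (n : ℕ) (p : Polynomial ℂ) : Polynomial ℂ :=
  (p.map (starRingEnd ℂ)).reflect n

namespace SzegoAux

local notation "conj'" => starRingEnd ℂ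

lemma conj_mul_self {z : ℂ} (hz : ‖z‖ = 1) : conj' z * z = 1 := by
  rw [RCLike.conj_mul, hz]; norm_num

lemma natDegree_polyStar_le {n : ℕ} {p : Polynomial ℂ} (hp : p.natDegree ≤ n) :
    (polyStar n p).natDegree ≤ n := by
  refine natDegree_le_iff_coeff_eq_zero.mpr fun m hm => ?_
  rw [polyStar, coeff_reflect, revAt_eq_self_of_lt hm, coeff_map,
    coeff_eq_zero_of_natDegree_lt (lt_of_le_of_lt hp hm), map_zero]

lemma coeff_polyStar_zero (n : ℕ) (p : Polynomial ℂ) :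
    (polyStar n p).coeff 0 = conj' (p.coeff n) := by
  rw [polyStar, coeff_reflect, revAt_zero, coeff_map]

lemma eval_polyStar {n : ℕ} {p : Polynomial ℂ} (hp : p.natDegree ≤ n) {z : ℂ}
    (hz : ‖z‖ = 1) : (polyStar n p).eval z = z ^ n * conj' (p.eval z) := by
  have hz0 : z ≠ 0 := by intro h; rw [h] at hz; simp at hz
  letI : Invertible (z⁻¹ : ℂ) := invertibleOfNonzero (inv_ne_zero hz0)
  have key := eval₂_reflect_mul_pow (starRingEnd ℂ) (z⁻¹) n p hp
  rw [invOf_eq_inv, inv_inv] at key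
  have hconj : (z⁻¹ : ℂ) = conj' z :=
    eq_comm.mp (eq_inv_of_mul_eq_one_left (conj_mul_self hz))
  have h2 : p.eval₂ conj' z⁻¹ = conj' (p.eval z) := by rw [hconj, eval₂_at_apply]
  have h3 : (polyStar n p).eval z = p.eval₂ conj' ((z : ℂ)⁻¹) * z ^ n := by
    rw [← key, polyStar, reflect_map, eval_map, inv_pow]
    field_simp
  rw [h3, h2]; ring

end SzegoAux
namespace SzegoAux

local notation "conj'" => starRingEnd ℂ

variable {μ : Measure ℂ} [IsProbabilityMeasure μ]

lemma integrable_of_continuous (hcirc : ∀ᵐ z ∂μ, ‖z‖ = 1) {E : Type*}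
    [NormedAddCommGroup E] {f : ℂ → E} (hf : Continuous f) : Integrable f μ := by
  obtain ⟨x, -, hx⟩ := (isCompact_sphere (0 : ℂ) 1).exists_isMaxOn
    (NormedSpace.sphere_nonempty.mpr zero_le_one) (hf.norm.continuousOn)
  refine Integrable.mono' (integrable_const ‖f x‖) hf.aestronglyMeasurable ?_
  filter_upwards [hcirc] with z hz
  exact hx (by simpa [mem_sphere_iff_norm] using hz)

/-- inner product of polynomials in L²(μ) -/
noncomputable def ip (μ : Measure ℂ) (p q : Polynomial ℂ) : ℂ :=
  ∫ z, conj' (p.eval z) * q.eval z ∂μ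

lemma ip_integrable (hcirc : ∀ᵐ z ∂μ, ‖z‖ = 1) (p q : Polynomial ℂ) :
    Integrable (fun z => conj' (p.eval z) * q.eval z) μ :=
  integrable_of_continuous hcirc ((continuous_star.comp p.continuous).mul q.continuous)

lemma ip_add_left (hcirc : ∀ᵐ z ∂μ, ‖z‖ = 1) (p p' q : Polynomial ℂ) :
    ip μ (p + p') q = ip μ p q + ip μ p' q := by
  unfold ip
  simp only [eval_add, map_add, add_mul]
  exact integral_add (ip_integrable hcirc p q) (ip_integrable hcirc p' q)

lemma ip_add_right (hcirc : ∀ᵐ z ∂μ, ‖z‖ = 1) (p q q' : Polynomial ℂ) :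
    ip μ p (q + q') = ip μ p q + ip μ p q' := by
  unfold ip
  simp only [eval_add, mul_add]
  exact integral_add (ip_integrable hcirc p q) (ip_integrable hcirc p q')

lemma ip_sub_left (hcirc : ∀ᵐ z ∂μ, ‖z‖ = 1) (p p' q : Polynomial ℂ) :
    ip μ (p - p') q = ip μ p q - ip μ p' q := by
  unfold ip
  simp only [eval_sub, map_sub, sub_mul]
  exact integral_sub (ip_integrable hcirc p q) (ip_integrable hcirc p' q)

lemma ip_sub_right (hcirc : ∀ᵐ z ∂μ, ‖z‖ = 1) (p q q' : Polynomial ℂ) :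
    ip μ p (q - q') = ip μ p q - ip μ p q' := by
  unfold ip
  simp only [eval_sub, mul_sub]
  exact integral_sub (ip_integrable hcirc p q) (ip_integrable hcirc p q')

lemma ip_C_mul_left (a : ℂ) (p q : Polynomial ℂ) :
    ip μ (C a * p) q = conj' a * ip μ p q := by
  unfold ip
  simp only [eval_mul, eval_C, map_mul, mul_assoc]
  exact integral_const_mul _ _

lemma ip_C_mul_right (a : ℂ) (p q : Polynomial ℂ) :
    ip μ p (C a * q) = a * ip μ p q := by
  unfold ip
  rw [← integral_const_mul]
  congr 1; funext z; simp only [eval_mul, eval_C]; ring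

lemma ip_conj (p q : Polynomial ℂ) : ip μ p q = conj' (ip μ q p) := by
  unfold ip
  rw [← integral_conj]
  congr 1; funext z; simp only [map_mul, RingHomCompTriple.comp_apply, RingHom.id_apply,
    Complex.conj_conj]; ring

lemma ip_X_mul (hcirc : ∀ᵐ z ∂μ, ‖z‖ = 1) (p q : Polynomial ℂ) :
    ip μ (X * p) (X * q) = ip μ p q := by
  unfold ip
  refine integral_congr_ae ?_
  filter_upwards [hcirc] with z hz
  simp only [eval_mul, eval_X, map_mul]
  have h1 : conj' z * z = 1 := by rw [RCLike.conj_mul, hz]; norm_num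
  linear_combination conj' (p.eval z) * q.eval z * h1

lemma ip_self_eq (p : Polynomial ℂ) :
    ip μ p p = ((∫ z, ‖p.eval z‖ ^ 2 ∂μ : ℝ) : ℂ) := by
  unfold ip
  have : ∫ z, ((‖p.eval z‖ ^ 2 : ℝ) : ℂ) ∂μ = ((∫ z, ‖p.eval z‖ ^ 2 ∂μ : ℝ) : ℂ) :=
    integral_ofReal
  rw [← this]
  congr 1; funext z
  rw [RCLike.conj_mul]
  norm_cast

lemma ip_expand (hcirc : ∀ᵐ z ∂μ, ‖z‖ = 1) (p q : Polynomial ℂ) {m : ℕ}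
    (hq : q.natDegree < m) :
    ip μ p q = ∑ k ∈ Finset.range m, q.coeff k * ip μ p (X ^ k) := by
  unfold ip
  have h1 : ∀ z : ℂ, conj' (p.eval z) * q.eval z
      = ∑ k ∈ Finset.range m, q.coeff k * (conj' (p.eval z) * (X ^ k : Polynomial ℂ).eval z) := by
    intro z
    rw [eval_eq_sum_range' hq, Finset.mul_sum]
    refine Finset.sum_congr rfl fun k _ => ?_
    simp only [eval_pow, eval_X]; ring
  calc (∫ z, conj' (p.eval z) * q.eval z ∂μ)
      = ∫ z, ∑ k ∈ Finset.range m, q.coeff k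
          * (conj' (p.eval z) * (X ^ k : Polynomial ℂ).eval z) ∂μ := by
        congr 1; funext z; exact h1 z
    _ = ∑ k ∈ Finset.range m, q.coeff k * ∫ z, conj' (p.eval z) * (X ^ k : Polynomial ℂ).eval z ∂μ := by
        rw [integral_finset_sum _ fun k _ => (ip_integrable hcirc p (X ^ k)).const_mul _]
        exact Finset.sum_congr rfl fun k _ => integral_const_mul _ _

lemma eval_ae_zero (hnontriv : ∀ s : Finset ℂ, μ ((↑s : Set ℂ)ᶜ) ≠ 0)
    {p : Polynomial ℂ} (hp : ∀ᵐ z ∂μ, p.eval z = 0) : p = 0 := by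
  by_contra h
  refine hnontriv p.roots.toFinset ?_
  refine measure_mono_null (fun z hz => ?_) (ae_iff.mp hp)
  intro hev
  exact hz (by simp only [Finset.coe_sort_coe, Multiset.mem_toFinset, Finset.mem_coe,
    mem_roots, h, ne_eq, not_false_eq_true, true_and, IsRoot.def]; exact hev)

lemma ip_self_pos (hcirc : ∀ᵐ z ∂μ, ‖z‖ = 1)
    (hnontriv : ∀ s : Finset ℂ, μ ((↑s : Set ℂ)ᶜ) ≠ 0)
    {p : Polynomial ℂ} (hp : p ≠ 0) : 0 < ∫ z, ‖p.eval z‖ ^ 2 ∂μ := by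
  rcases (integral_nonneg (f := fun z => ‖p.eval z‖ ^ 2) (fun z => sq_nonneg _)).lt_or_eq with h | h
  · exact h
  · exfalso
    apply hp
    have hint : Integrable (fun z => ‖p.eval z‖ ^ 2) μ :=
      integrable_of_continuous hcirc (by fun_prop)
    have := (integral_eq_zero_iff_of_nonneg (fun z => sq_nonneg _) hint).mp h.symm
    refine eval_ae_zero hnontriv ?_
    filter_upwards [this] with z hz
    have : ‖p.eval z‖ ^ 2 = 0 := hz
    simpa using this


lemma ip_pow_polyStar (hcirc : ∀ᵐ z ∂μ, ‖z‖ = 1) {n k : ℕ} (hk : k ≤ n)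
    {p : Polynomial ℂ} (hp : p.natDegree ≤ n) :
    ip μ (X ^ k) (polyStar n p) = ip μ p (X ^ (n - k)) := by
  unfold ip
  refine integral_congr_ae ?_
  filter_upwards [hcirc] with z hz
  rw [eval_polyStar hp hz]
  simp only [eval_pow, eval_X, map_pow]
  have h2 : (conj' z) ^ k * z ^ k = 1 := by rw [← mul_pow, conj_mul_self hz, one_pow]
  have hnk : z ^ n = z ^ (n - k) * z ^ k := by rw [← pow_add, Nat.sub_add_cancel hk]
  rw [hnk]
  linear_combination (z ^ (n - k) * conj' (p.eval z)) * h2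

lemma ip_polyStar_self (hcirc : ∀ᵐ z ∂μ, ‖z‖ = 1) {n : ℕ} {p : Polynomial ℂ}
    (hp : p.natDegree ≤ n) : ip μ (polyStar n p) (polyStar n p) = ip μ p p := by
  unfold ip
  refine integral_congr_ae ?_
  filter_upwards [hcirc] with z hz
  rw [eval_polyStar hp hz]
  simp only [map_mul, map_pow, Complex.conj_conj]
  have h2 : (conj' z) ^ n * z ^ n = 1 := by rw [← mul_pow, conj_mul_self hz, one_pow]
  linear_combination (p.eval z * conj' (p.eval z)) * h2

end SzegoAux

open SzegoAux in
/-- Szegő recursion: for a nontrivial probability measure on the unit circle with monic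
orthogonal polynomials `Φ`, there is a Verblunsky coefficient `α n` in the open unit disk with
`Φ (n+1) = z Φ n - conj (α n) (Φ n)^*`. -/
theorem szego_recursion
    (μ : Measure ℂ) (hprob : IsProbabilityMeasure μ)
    (hcirc : ∀ᵐ z ∂μ, ‖z‖ = 1)
    (hnontriv : ∀ s : Finset ℂ, μ ((↑s : Set ℂ)ᶜ) ≠ 0)
    (Φ : ℕ → Polynomial ℂ)
    (hmonic : ∀ n, (Φ n).Monic)
    (hdeg : ∀ n, (Φ n).natDegree = n)
    (horth : ∀ n k, k < n → ∫ z, (starRingEnd ℂ) ((Φ n).eval z) * z ^ k ∂μ = 0)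
    (n : ℕ) :
    ∃ α : ℂ, ‖α‖ < 1 ∧
      Φ (n + 1) = X * Φ n - C ((starRingEnd ℂ) α) * polyStar n (Φ n) := by
  classical
  set S := polyStar n (Φ n) with hSdef
  set c := (Φ (n + 1)).coeff 0 with hcdef
  have hdegn : (Φ n).natDegree ≤ n := (hdeg n).le
  have hlead : (Φ n).coeff n = 1 := by
    have := (hmonic n).coeff_natDegree; rwa [hdeg n] at this
  have hlead1 : (Φ (n + 1)).coeff (n + 1) = 1 := by
    have := (hmonic (n + 1)).coeff_natDegree; rwa [hdeg (n + 1)] at this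
  have hSdeg : S.natDegree ≤ n := natDegree_polyStar_le hdegn
  have hS0 : S.coeff 0 = 1 := by
    rw [hSdef, coeff_polyStar_zero, hlead, map_one]
  have horthip : ∀ m k, k < m → ip μ (Φ m) (X ^ k) = 0 := by
    intro m k h
    have h2 := horth m k h
    unfold ip
    simpa only [eval_pow, eval_X] using h2
  set Q := Φ (n + 1) - X * Φ n - C c * S with hQdef
  have hQ0 : Q.coeff 0 = 0 := by
    rw [hQdef]
    simp only [coeff_sub, mul_coeff_zero, coeff_X_zero, coeff_C_mul, hS0, zero_mul, mul_one, coeff_C_zero]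
    rw [← hcdef]
    ring
  have hQdeg : Q.natDegree ≤ n + 1 := by
    have h1 : (X * Φ n).natDegree ≤ n + 1 := by
      refine le_trans (natDegree_mul_le) ?_
      simp only [natDegree_X, hdeg n]
      omega
    have h2 : (C c * S).natDegree ≤ n + 1 := by
      refine le_trans (natDegree_mul_le) ?_
      simp only [natDegree_C, zero_add]
      omega
    refine le_trans (natDegree_sub_le _ _) (max_le ?_ h2)
    refine le_trans (natDegree_sub_le _ _) (max_le (by rw [hdeg (n + 1)]) h1)
  have hQtop : Q.coeff (n + 1) = 0 := by
    have hSc : S.coeff (n + 1) = 0 :=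
      coeff_eq_zero_of_natDegree_lt (lt_of_le_of_lt hSdeg (Nat.lt_succ_self n))
    rw [hQdef]
    simp only [coeff_sub, coeff_X_mul, coeff_C_mul, hSc, hlead1, hlead, mul_zero]
    ring
  have hQorth : ∀ k, 1 ≤ k → k ≤ n → ip μ Q (X ^ k) = 0 := by
    intro k hk1 hkn
    rcases k with _ | j
    · omega
    rw [hQdef, ip_sub_left hcirc, ip_sub_left hcirc, ip_C_mul_left]
    have e1 : ip μ (Φ (n + 1)) (X ^ (j + 1)) = 0 := horthip (n + 1) _ (by omega)
    have e2 : ip μ (X * Φ n) (X ^ (j + 1)) = 0 := by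
      rw [pow_succ', ip_X_mul hcirc]
      exact horthip n j (by omega)
    have e3 : ip μ S (X ^ (j + 1)) = 0 := by
      rw [hSdef, ip_conj, ip_pow_polyStar hcirc (by omega) hdegn,
        horthip n _ (by omega), map_zero]
    rw [e1, e2, e3]; ring
  have hQQ : ip μ Q Q = 0 := by
    rw [ip_expand hcirc Q Q (lt_of_le_of_lt hQdeg (Nat.lt_succ_self _))]
    refine Finset.sum_eq_zero fun k hk => ?_
    have hkm : k < n + 2 := Finset.mem_range.mp hk
    rcases Nat.eq_zero_or_pos k with rfl | hk1
    · rw [hQ0]; ring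
    rcases Nat.lt_or_ge k (n + 1) with h | h
    · rw [hQorth k hk1 (by omega)]; ring
    · have hke : k = n + 1 := by omega
      rw [hke, hQtop]; ring
  have hQz : Q = 0 := by
    have h := hQQ
    rw [ip_self_eq] at h
    have h2 : ∫ z, ‖Q.eval z‖ ^ 2 ∂μ = 0 := by exact_mod_cast h
    have hint : Integrable (fun z => ‖Q.eval z‖ ^ 2) μ :=
      integrable_of_continuous hcirc (by fun_prop)
    have h3 := (integral_eq_zero_iff_of_nonneg (fun z => sq_nonneg _) hint).mp h2
    refine eval_ae_zero hnontriv ?_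
    filter_upwards [h3] with z hz
    have : ‖Q.eval z‖ ^ 2 = 0 := hz
    simpa using this
  have hrec : Φ (n + 1) = X * Φ n + C c * S := by
    have h : Φ (n + 1) - (X * Φ n + C c * S) = 0 := by rw [← sub_sub]; exact hQz
    exact sub_eq_zero.mp h
  set Nn := ip μ (Φ n) (Φ n) with hNndef
  have hSS : ip μ S S = Nn := ip_polyStar_self hcirc hdegn
  have hT2 : ip μ (Φ (n + 1)) S = 0 := by
    rw [ip_expand hcirc _ S (lt_of_le_of_lt hSdeg (Nat.lt_succ_self n))]
    refine Finset.sum_eq_zero fun k hk => ?_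
    rw [horthip (n + 1) k (Finset.mem_range.mp hk)]
    ring
  have hT2' : ip μ S (Φ (n + 1)) = 0 := by rw [ip_conj, hT2, map_zero]
  have hXPhi : X * Φ n = Φ (n + 1) - C c * S := by
    rw [hrec]; exact (add_sub_cancel_right _ _).symm
  have hT3 : ip μ S (X * Φ n) = -(c * Nn) := by
    rw [hXPhi, ip_sub_right hcirc, hT2', ip_C_mul_right, hSS]; ring
  have hM : ip μ (Φ (n + 1)) (Φ (n + 1)) = Nn - (starRingEnd ℂ) c * (c * Nn) := by
    calc ip μ (Φ (n + 1)) (Φ (n + 1))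
        = ip μ (Φ (n + 1)) (X * Φ n + C c * S) := by rw [← hrec]
      _ = ip μ (Φ (n + 1)) (X * Φ n) + c * ip μ (Φ (n + 1)) S := by
          rw [ip_add_right hcirc, ip_C_mul_right]
      _ = ip μ (X * Φ n + C c * S) (X * Φ n) := by rw [hT2, ← hrec]; ring
      _ = ip μ (X * Φ n) (X * Φ n) + (starRingEnd ℂ) c * ip μ S (X * Φ n) := by
          rw [ip_add_left hcirc, ip_C_mul_left]
      _ = Nn + (starRingEnd ℂ) c * -(c * Nn) := by rw [ip_X_mul hcirc, hT3]
      _ = Nn - (starRingEnd ℂ) c * (c * Nn) := by ring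
  have hMr := ip_self_eq (μ := μ) (Φ (n + 1))
  have hNr : Nn = ((∫ z, ‖(Φ n).eval z‖ ^ 2 ∂μ : ℝ) : ℂ) := ip_self_eq (μ := μ) (Φ n)
  have hcc : (starRingEnd ℂ) c * c = ((‖c‖ ^ 2 : ℝ) : ℂ) := by rw [RCLike.conj_mul]; norm_cast
  set M := ∫ z, ‖(Φ (n + 1)).eval z‖ ^ 2 ∂μ with hMdef
  set N2 := ∫ z, ‖(Φ n).eval z‖ ^ 2 ∂μ with hN2def
  have hMN : (M : ℂ) = (N2 : ℂ) - ((‖c‖ ^ 2 : ℝ) : ℂ) * N2 := by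
    rw [← hMr, hM, hNr]
    linear_combination (-(N2 : ℂ)) * hcc
  have hMreal : M = N2 - ‖c‖ ^ 2 * N2 := by exact_mod_cast hMN
  have hMpos : 0 < M := ip_self_pos hcirc hnontriv (hmonic (n + 1)).ne_zero
  have hNpos : 0 < N2 := ip_self_pos hcirc hnontriv (hmonic n).ne_zero
  refine ⟨-(starRingEnd ℂ) c, ?_, ?_⟩
  · have hlt : ‖c‖ ^ 2 < 1 := by nlinarith
    have hnc : ‖-(starRingEnd ℂ) c‖ = ‖c‖ := by rw [norm_neg, RCLike.norm_conj]
    rw [hnc]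
    nlinarith [norm_nonneg c]
  · rw [hrec, map_neg, Complex.conj_conj, map_neg, neg_mul, sub_neg_eq_add]
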